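/- Let G be a group, ℋ a Hilbert space, and ρ : G → GL(B(ℋ)) arising from a uniformly bounded representation π : G → B(ℋ)ˣ (invertible operators) with M := sup_g ‖π(g)‖ and sup_g ‖π(g)⁻¹‖ ≤ M. Suppose G admits a left-invariant mean on ℓ^∞(G). Then there exists a bounded idempotent linear map P : B(ℋ) → B(ℋ) with range equal to the commutant π(G)′ = {A ∈ B(ℋ) : A π(g) = π(g) A for all g ∈ G} and ‖P‖ ≤ M². -/

import Mathlib

open scoped InnerProductSpace ComplexConjugate

/-- For a uniformly bounded representation `π` of an amenable group on a Hilbert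
space there is a bounded idempotent of norm at most `M²` on `B(H)` whose range is
the commutant `π(G)'`. -/
theorem stmt_13 {G H : Type*} [Group G]
    [NormedAddCommGroup H] [InnerProductSpace ℂ H] [CompleteSpace H]
    (π : G → H →L[ℂ] H)
    (hπ : ∀ g h : G, π (g * h) = (π g).comp (π h))
    (hπ1 : π 1 = 1)
    (M : ℝ) (hM0 : 0 ≤ M)
    (hM : ∀ g : G, ‖π g‖ ≤ M) (hM' : ∀ g : G, ‖π g⁻¹‖ ≤ M)
    (μ : (G → ℂ) →ₗ[ℂ] ℂ)
    (hμbdd : ∀ (f : G → ℂ) (C : ℝ), 0 ≤ C → (∀ g, ‖f g‖ ≤ C) → ‖μ f‖ ≤ C)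
    (hμ1 : μ (fun _ : G => (1 : ℂ)) = 1)
    (hμinv : ∀ (t : G) (f : G → ℂ), μ (fun g : G => f (t * g)) = μ f) :
    ∃ P : (H →L[ℂ] H) →L[ℂ] (H →L[ℂ] H),
      P.comp P = P ∧ ‖P‖ ≤ M ^ 2 ∧
      Set.range ⇑P = {A : H →L[ℂ] H | ∀ g : G, A.comp (π g) = (π g).comp A} := by
  classical
  -- basic identities for π
  have hid1 : ∀ (g : G) (x : H), π g (π g⁻¹ x) = x := by
    intro g x
    have h := congrArg (fun T : H →L[ℂ] H => T x) (hπ g g⁻¹)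
    simp only [mul_inv_cancel, hπ1, ContinuousLinearMap.comp_apply,
      ContinuousLinearMap.one_apply] at h
    exact h.symm
  have hid2 : ∀ (g : G) (x : H), π g⁻¹ (π g x) = x := by
    intro g x
    have h := hid1 g⁻¹ x
    rwa [inv_inv] at h
  -- the coefficient functions
  set f : (H →L[ℂ] H) → H → H → G → ℂ :=
    fun A ξ η g => ⟪η, π g (A (π g⁻¹ ξ))⟫_ℂ with hf
  -- pointwise bound
  have hyb : ∀ (A : H →L[ℂ] H) (ξ : H) (g : G),
      ‖π g (A (π g⁻¹ ξ))‖ ≤ M ^ 2 * ‖A‖ * ‖ξ‖ := by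
    intro A ξ g
    have h1 : ‖π g⁻¹ ξ‖ ≤ M * ‖ξ‖ :=
      ((π g⁻¹).le_opNorm ξ).trans (by gcongr; exact hM' g)
    have h2 : ‖A (π g⁻¹ ξ)‖ ≤ ‖A‖ * (M * ‖ξ‖) :=
      (A.le_opNorm _).trans (by gcongr)
    have h3 : ‖π g (A (π g⁻¹ ξ))‖ ≤ M * (‖A‖ * (M * ‖ξ‖)) := by
      refine ((π g).le_opNorm _).trans ?_
      have := mul_le_mul (hM g) h2 (norm_nonneg _) hM0
      linarith
    calc ‖π g (A (π g⁻¹ ξ))‖ ≤ M * (‖A‖ * (M * ‖ξ‖)) := h3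
      _ = M ^ 2 * ‖A‖ * ‖ξ‖ := by ring
  have hfb : ∀ (A : H →L[ℂ] H) (ξ η : H) (g : G),
      ‖f A ξ η g‖ ≤ M ^ 2 * ‖A‖ * ‖ξ‖ * ‖η‖ := by
    intro A ξ η g
    calc ‖f A ξ η g‖ ≤ ‖η‖ * ‖π g (A (π g⁻¹ ξ))‖ := norm_inner_le_norm _ _
      _ ≤ ‖η‖ * (M ^ 2 * ‖A‖ * ‖ξ‖) := by gcongr; exact hyb A ξ g
      _ = M ^ 2 * ‖A‖ * ‖ξ‖ * ‖η‖ := by ring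
  -- Riesz representation of the averaged coefficients
  have hex : ∀ (A : H →L[ℂ] H) (ξ : H), ∃ y : H,
      ‖y‖ ≤ M ^ 2 * ‖A‖ * ‖ξ‖ ∧ ∀ η : H, ⟪η, y⟫_ℂ = μ (f A ξ η) := by
    intro A ξ
    have hC : (0 : ℝ) ≤ M ^ 2 * ‖A‖ * ‖ξ‖ := by positivity
    set F0 : H →ₗ[ℂ] ℂ :=
      { toFun := fun η => conj (μ (f A ξ η))
        map_add' := by
          intro a b
          have h : f A ξ (a + b) = f A ξ a + f A ξ b := by
            funext g; simp [hf, inner_add_left]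
          show conj (μ (f A ξ (a + b))) = conj (μ (f A ξ a)) + conj (μ (f A ξ b))
          rw [h, map_add, map_add]
        map_smul' := by
          intro c a
          have h : f A ξ (c • a) = (conj c) • f A ξ a := by
            funext g; simp [hf, inner_smul_left]; ring
          show conj (μ (f A ξ (c • a))) = (RingHom.id ℂ) c • conj (μ (f A ξ a))
          rw [h, map_smul]
          simp [smul_eq_mul, map_mul] } with hF0def
    have hF0 : ∀ η, ‖F0 η‖ ≤ (M ^ 2 * ‖A‖ * ‖ξ‖) * ‖η‖ := by
      intro η
      have h := hμbdd (f A ξ η) (M ^ 2 * ‖A‖ * ‖ξ‖ * ‖η‖) (by positivity)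
        (fun g => hfb A ξ η g)
      simpa [hF0def, mul_assoc] using h
    refine ⟨(InnerProductSpace.toDual ℂ H).symm (F0.mkContinuous _ hF0), ?_, ?_⟩
    · rw [LinearIsometryEquiv.norm_map]
      exact F0.mkContinuous_norm_le hC hF0
    · intro η
      have h1 : ⟪(InnerProductSpace.toDual ℂ H).symm (F0.mkContinuous _ hF0), η⟫_ℂ
          = F0 η := InnerProductSpace.toDual_symm_apply
      calc ⟪η, (InnerProductSpace.toDual ℂ H).symm (F0.mkContinuous _ hF0)⟫_ℂ
          = conj ⟪(InnerProductSpace.toDual ℂ H).symm (F0.mkContinuous _ hF0), η⟫_ℂ :=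
            (inner_conj_symm _ _).symm
        _ = conj (F0 η) := by rw [h1]
        _ = μ (f A ξ η) := by simp [hF0def]
  choose Praw hPnorm hPinner using hex
  -- linearity of Praw
  have hadd : ∀ (A : H →L[ℂ] H) (ξ₁ ξ₂ : H),
      Praw A (ξ₁ + ξ₂) = Praw A ξ₁ + Praw A ξ₂ := by
    intro A ξ₁ ξ₂
    apply ext_inner_left ℂ
    intro v
    rw [inner_add_right, hPinner, hPinner, hPinner,
      show f A (ξ₁ + ξ₂) v = f A ξ₁ v + f A ξ₂ v from by
        funext g; simp [hf, inner_add_right], map_add]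
  have hsmul : ∀ (A : H →L[ℂ] H) (c : ℂ) (ξ : H),
      Praw A (c • ξ) = c • Praw A ξ := by
    intro A c ξ
    apply ext_inner_left ℂ
    intro v
    rw [inner_smul_right, hPinner, hPinner,
      show f A (c • ξ) v = c • f A ξ v from by
        funext g; simp [hf, inner_smul_right], map_smul, smul_eq_mul]
  have hAadd : ∀ (A B : H →L[ℂ] H) (ξ : H),
      Praw (A + B) ξ = Praw A ξ + Praw B ξ := by
    intro A B ξ
    apply ext_inner_left ℂ
    intro v
    rw [inner_add_right, hPinner, hPinner, hPinner,
      show f (A + B) ξ v = f A ξ v + f B ξ v from by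
        funext g; simp [hf, inner_add_right], map_add]
  have hAsmul : ∀ (c : ℂ) (A : H →L[ℂ] H) (ξ : H),
      Praw (c • A) ξ = c • Praw A ξ := by
    intro c A ξ
    apply ext_inner_left ℂ
    intro v
    rw [inner_smul_right, hPinner, hPinner,
      show f (c • A) ξ v = c • f A ξ v from by
        funext g; simp [hf, inner_smul_right], map_smul, smul_eq_mul]
  -- assemble the continuous linear map P
  let P1 : (H →L[ℂ] H) → (H →L[ℂ] H) := fun A =>
    LinearMap.mkContinuous
      { toFun := Praw A, map_add' := hadd A, map_smul' := hsmul A }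
      (M ^ 2 * ‖A‖) (fun ξ => hPnorm A ξ)
  let P0 : (H →L[ℂ] H) →ₗ[ℂ] (H →L[ℂ] H) :=
    { toFun := P1
      map_add' := by
        intro A B; ext ξ
        exact hAadd A B ξ
      map_smul' := by
        intro c A; ext ξ
        exact hAsmul c A ξ }
  have hP0norm : ∀ A, ‖P0 A‖ ≤ M ^ 2 * ‖A‖ := by
    intro A
    exact LinearMap.mkContinuous_norm_le _ (by positivity) (fun ξ => hPnorm A ξ)
  let P : (H →L[ℂ] H) →L[ℂ] (H →L[ℂ] H) := P0.mkContinuous (M ^ 2) hP0norm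
  have hPapp : ∀ (A : H →L[ℂ] H) (ξ : H), P A ξ = Praw A ξ := fun A ξ => rfl
  -- μ of a constant
  have hconst : ∀ c : ℂ, μ (fun _ : G => c) = c := by
    intro c
    have h : (fun _ : G => c) = c • (fun _ : G => (1 : ℂ)) := by
      funext g; simp
    rw [h, map_smul, hμ1, smul_eq_mul, mul_one]
  -- P fixes the commutant
  have hfix : ∀ A : H →L[ℂ] H,
      (∀ g : G, A.comp (π g) = (π g).comp A) → P A = A := by
    intro A hA
    ext ξ
    apply ext_inner_left ℂ
    intro v
    rw [hPapp, hPinner]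
    have h : f A ξ v = fun _ : G => ⟪v, A ξ⟫_ℂ := by
      funext g
      have h2 := congrArg (fun T : H →L[ℂ] H => T (π g⁻¹ ξ)) (hA g)
      simp only [ContinuousLinearMap.comp_apply] at h2
      rw [hid1] at h2
      simp [hf, ← h2]
    rw [h, hconst]
  -- range of P lies in the commutant
  have hcomm : ∀ (A : H →L[ℂ] H) (t : G),
      (P A).comp (π t) = (π t).comp (P A) := by
    intro A t
    have key : ∀ ξ : H, π t (P A (π t⁻¹ ξ)) = P A ξ := by
      intro ξ
      apply ext_inner_left ℂ
      intro v
      calc ⟪v, π t (P A (π t⁻¹ ξ))⟫_ℂ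
          = ⟪ContinuousLinearMap.adjoint (π t) v, P A (π t⁻¹ ξ)⟫_ℂ :=
            (ContinuousLinearMap.adjoint_inner_left (π t) _ v).symm
        _ = μ (f A (π t⁻¹ ξ) (ContinuousLinearMap.adjoint (π t) v)) := by
            rw [hPapp, hPinner]
        _ = μ (fun g : G => f A ξ v (t * g)) := by
            refine congrArg μ (funext fun g => ?_)
            simp only [hf, ContinuousLinearMap.adjoint_inner_left, mul_inv_rev,
              hπ t g, hπ g⁻¹ t⁻¹, ContinuousLinearMap.comp_apply]
        _ = μ (f A ξ v) := hμinv t _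
        _ = ⟪v, P A ξ⟫_ℂ := by rw [hPapp, hPinner]
    ext ξ
    simp only [ContinuousLinearMap.comp_apply]
    have h := key (π t ξ)
    rw [hid2 t ξ] at h
    exact h.symm
  refine ⟨P, ?_, ?_, ?_⟩
  · ext A
    simp only [ContinuousLinearMap.comp_apply]
    exact congrArg (fun T : H →L[ℂ] H => T _) (hfix (P A) (hcomm A))
  · exact P0.mkContinuous_norm_le (by positivity) hP0norm
  · ext A
    simp only [Set.mem_range, Set.mem_setOf_eq]
    constructor
    · rintro ⟨B, rfl⟩
      exact hcomm B
    · intro hA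
      exact ⟨A, hfix A hA⟩
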